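/- The quadratic recurrence is non-autonomously linearized: for every t ≥ 1, z_1^{t+1} = λ_N^t z_{N+1}^t − z_N^t; z_2^{t+1} = λ_1^t z_1^{t+1} − z_{N+1}^t; and z_{i+2}^{t+1} = λ_{i+1}^t z_{i+1}^{t+1} − z_i^{t+1} for i = 1,…,N−1. -/

import Mathlib

def ext {K : Type*} (N : ℕ) (f : ℕ → ℕ → K) (i t : ℕ) : K :=
  if i = 0 then f (N + 1) (t - 1) else if i = N + 2 then f 1 (t + 1) else f i t

def lam {K : Type*} [Field K] (N : ℕ) (z : ℕ → ℕ → K) (i t : ℕ) : K :=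
  if i = N then (z 1 t * z N t + z 2 t * z (N + 1) t + 1) / (z 1 t * z (N + 1) t)
  else (z i t + z (i + 2) t) / z (i + 1) t

theorem stmt14 {K : Type*} [Field K] (N : ℕ) (hN : 2 ≤ N) (z : ℕ → ℕ → K)
    (hz : ∀ i t, 1 ≤ i → i ≤ N + 1 → 1 ≤ t → z i t ≠ 0)
    (hrec : ∀ t, 1 ≤ t → ∀ i, 1 ≤ i → i ≤ N + 1 →
      z i (t + 1) * z i t = ext N z (i - 1) (t + 1) * ext N z (i + 1) t + 1) :
    ∀ t, 1 ≤ t →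
      z 1 (t + 1) = lam N z N t * z (N + 1) t - z N t ∧
      z 2 (t + 1) = lam N z 1 t * z 1 (t + 1) - z (N + 1) t ∧
      (∀ i, 1 ≤ i → i ≤ N - 1 →
        z (i + 2) (t + 1) = lam N z (i + 1) t * z (i + 1) (t + 1) - z i (t + 1)) := by
  intro t ht
  have hz1 : z 1 t ≠ 0 := hz 1 t le_rfl (by omega) ht
  have hz2 : z 2 t ≠ 0 := hz 2 t (by omega) (by omega) ht
  have hzN1 : z (N + 1) t ≠ 0 := hz (N + 1) t (by omega) le_rfl ht
  have ext_eq : ∀ i s, i ≠ 0 → i ≠ N + 2 → ext N z i s = z i s := by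
    intro i s h0 h2
    simp [ext, h0, h2]
  -- recurrence at i = 1
  have h1 : z 1 (t + 1) * z 1 t = z (N + 1) t * z 2 t + 1 := by
    have h := hrec t ht 1 le_rfl (by omega)
    rw [show (1 : ℕ) - 1 = 0 from rfl] at h
    rw [show ext N z 0 (t + 1) = z (N + 1) t from by simp [ext]] at h
    rw [ext_eq 2 t (by omega) (by omega)] at h
    exact h
  -- recurrence at interior indices: j+1 ranges over 2..N
  have hmid : ∀ j, 1 ≤ j → j + 1 ≤ N →
      z (j + 1) (t + 1) * z (j + 1) t = z j (t + 1) * z (j + 2) t + 1 := by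
    intro j hj1 hjN
    have h := hrec t ht (j + 1) (by omega) (by omega)
    have e1 : j + 1 - 1 = j := by omega
    rw [e1] at h
    rw [ext_eq j (t + 1) (by omega) (by omega)] at h
    rw [ext_eq (j + 1 + 1) t (by omega) (by omega)] at h
    exact h
  -- recurrence at i = N + 1
  have hlast : z (N + 1) (t + 1) * z (N + 1) t = z N (t + 1) * z 1 (t + 1) + 1 := by
    have h := hrec t ht (N + 1) (by omega) le_rfl
    have e1 : N + 1 - 1 = N := by omega
    rw [e1] at h
    rw [ext_eq N (t + 1) (by omega) (by omega)] at h
    rw [show ext N z (N + 1 + 1) t = z 1 (t + 1) from by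
      simp [ext, show N + 1 + 1 = N + 2 from rfl]] at h
    exact h
  refine ⟨?_, ?_, ?_⟩
  · rw [lam, if_pos rfl]
    field_simp
    linear_combination h1
  · rw [lam, if_neg (by omega)]
    have hA := hmid 1 le_rfl (by omega)
    field_simp
    linear_combination hA - h1
  · intro i hi1 hiN
    by_cases hiN' : i + 1 = N
    · have e2 : i + 2 = N + 1 := by omega
      rw [e2, hiN', lam, if_pos rfl]
      have hB := hmid i hi1 (by omega)
      rw [e2, hiN'] at hB
      field_simp
      linear_combination z 1 t * hlast + z N (t + 1) * h1 - z 1 t * hB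
    · rw [lam, if_neg (by omega)]
      have hA := hmid (i + 1) (by omega) (by omega)
      have hB := hmid i hi1 (by omega)
      have hzi2 : z (i + 2) t ≠ 0 := hz (i + 2) t (by omega) (by omega) ht
      field_simp
      linear_combination hA - hB
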